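/- Let d ≥ 2 and n ≥ 2 be integers, N = n^d, let x^α = α/n for α ∈ {0,…,n−1}^d be the uniform grid of [0,1]^d, and let {y^α}_{α ∈ {0,…,n−1}^d} be arbitrary points of ℝ^d. Set c = max_α ‖y^α − x^α‖₂ + n^{−1}. Then for every ε > 0 there exists a bijection G : ℝ^d → ℝ^d such that ‖G(x^α) − y^α‖₂ < ε for every α, and both G and G^{−1} are Lipschitz (Euclidean norm) with Lipschitz constant at most (n/(n−1))·(1 + 6Nc)·(1 + 2Nε)·(1 + 6Nε^{−1}c). -/

import Mathlib

open scoped NNReal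

/-- The uniform grid point `x^α = α/n` of `[0,1]^d`. -/
noncomputable def gridPoint (d n : ℕ) (α : Fin d → Fin n) : EuclideanSpace ℝ (Fin d) :=
  WithLp.toLp 2 (fun i => (α i : ℝ) / n)

section Tent

variable {X : Type*} [PseudoMetricSpace X] {E : Type*} [NormedAddCommGroup E]
  [NormedSpace ℝ E]

/-- A "tent" bump function of half-width `δ/2` centered at `p`. -/
noncomputable def tent (δ : ℝ) (p x : X) : ℝ := max 0 (1 - (2/δ) * dist x p)

lemma tent_nonneg (δ : ℝ) (p x : X) : 0 ≤ tent δ p x := le_max_left _ _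

lemma tent_self (δ : ℝ) (p : X) : tent δ p p = 1 := by
  simp [tent]

lemma tent_le_one {δ : ℝ} (hδ : 0 < δ) (p x : X) : tent δ p x ≤ 1 := by
  have : (0:ℝ) ≤ (2/δ) * dist x p := by positivity
  simp only [tent, max_le_iff]
  constructor <;> linarith

lemma tent_eq_zero {δ : ℝ} (hδ : 0 < δ) {p x : X} (h : δ/2 ≤ dist x p) :
    tent δ p x = 0 := by
  have h2 : (1:ℝ) ≤ (2/δ) * dist x p := by
    rw [div_mul_eq_mul_div, le_div_iff₀ hδ]
    linarith
  simp only [tent, max_eq_left_iff]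
  linarith

lemma dist_lt_of_tent_ne_zero {δ : ℝ} (hδ : 0 < δ) {p x : X} (h : tent δ p x ≠ 0) :
    dist x p < δ/2 := by
  by_contra hh
  exact h (tent_eq_zero hδ (not_lt.1 hh))

lemma tent_dist_le {δ : ℝ} (hδ : 0 < δ) (p x y : X) :
    |tent δ p x - tent δ p y| ≤ (2/δ) * dist x y := by
  have h1 : |tent δ p x - tent δ p y| ≤
      |(1 - (2/δ) * dist x p) - (1 - (2/δ) * dist y p)| := by
    have := abs_max_sub_max_le_abs (1 - (2/δ) * dist x p) (1 - (2/δ) * dist y p) 0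
    simpa [tent, max_comm] using this
  have h2 : (1 - (2/δ) * dist x p) - (1 - (2/δ) * dist y p)
      = (2/δ) * (dist y p - dist x p) := by ring
  rw [h2, abs_mul] at h1
  have h3 : |dist y p - dist x p| ≤ dist x y := by
    rw [abs_sub_comm]; exact abs_dist_sub_le x y p
  have h4 : |(2/δ)| = 2/δ := abs_of_pos (by positivity)
  calc |tent δ p x - tent δ p y| ≤ (2/δ) * |dist y p - dist x p| := by rw [← h4]; exact h1
    _ ≤ (2/δ) * dist x y := by
        exact mul_le_mul_of_nonneg_left h3 (by positivity)

variable {ι : Type*} [Fintype ι]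

/-- Sum of disjointly supported tent functions times vector values. -/
noncomputable def tentSum (δ : ℝ) (p : ι → X) (w : ι → E) (x : X) : E :=
  ∑ a : ι, tent δ (p a) x • w a

lemma tentSum_center {δ : ℝ} (hδ : 0 < δ) {p : ι → X}
    (hsep : ∀ a b : ι, a ≠ b → δ ≤ dist (p a) (p b)) (w : ι → E) (b : ι) :
    tentSum δ p w (p b) = w b := by
  rw [tentSum, Finset.sum_eq_single b]
  · rw [tent_self, one_smul]
  · intro a _ hab
    have : tent δ (p a) (p b) = 0 := by
      apply tent_eq_zero hδ
      have := hsep a b hab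
      rw [dist_comm]
      linarith
    rw [this, zero_smul]
  · intro h; exact absurd (Finset.mem_univ b) h

lemma tentSum_eq_single {δ : ℝ} (hδ : 0 < δ) {p : ι → X}
    (hsep : ∀ a b : ι, a ≠ b → δ ≤ dist (p a) (p b)) (w : ι → E) {x : X} {a : ι}
    (ha : tent δ (p a) x ≠ 0) :
    tentSum δ p w x = tent δ (p a) x • w a := by
  rw [tentSum, Finset.sum_eq_single a]
  · intro b _ hba
    have hxa := dist_lt_of_tent_ne_zero hδ ha
    have : δ/2 ≤ dist x (p b) := by
      have h1 := hsep a b (Ne.symm hba)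
      have h2 := dist_triangle (p a) x (p b)
      rw [dist_comm (p a) x] at h2
      linarith
    rw [tent_eq_zero hδ this, zero_smul]
  · intro h; exact absurd (Finset.mem_univ a) h

lemma tentSum_eq_zero {δ : ℝ} {p : ι → X} (w : ι → E) {x : X}
    (h : ∀ a, tent δ (p a) x = 0) : tentSum δ p w x = 0 := by
  rw [tentSum, Finset.sum_eq_zero]
  intro a _
  rw [h a, zero_smul]

lemma tentSum_lipschitz {δ : ℝ} (hδ : 0 < δ) {p : ι → X}
    (hsep : ∀ a b : ι, a ≠ b → δ ≤ dist (p a) (p b)) {w : ι → E} {C : ℝ}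
    (hC0 : 0 ≤ C) (hC : ∀ a, ‖w a‖ ≤ C) :
    LipschitzWith (Real.toNNReal ((2/δ) * C)) (tentSum δ p w) := by
  apply LipschitzWith.of_dist_le_mul
  intro x y
  rw [Real.coe_toNNReal _ (by positivity)]
  rw [dist_eq_norm]
  -- main case analysis
  have key : ∀ u v : X, (∃ a, tent δ (p a) u ≠ 0) →
      ‖tentSum δ p w u - tentSum δ p w v‖ ≤ (2/δ) * C * dist u v := by
    intro u v ⟨a, hau⟩
    rcases Classical.em (∃ b, tent δ (p b) v ≠ 0) with ⟨b, hbv⟩ | hv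
    · by_cases hab : a = b
      · subst hab
        rw [tentSum_eq_single hδ hsep w hau, tentSum_eq_single hδ hsep w hbv, ← sub_smul,
          norm_smul]
        calc ‖tent δ (p a) u - tent δ (p a) v‖ * ‖w a‖
            ≤ ((2/δ) * dist u v) * C := by
              apply mul_le_mul _ (hC a) (norm_nonneg _) (by positivity)
              simpa [Real.norm_eq_abs] using tent_dist_le hδ (p a) u v
          _ = (2/δ) * C * dist u v := by ring
      · rw [tentSum_eq_single hδ hsep w hau, tentSum_eq_single hδ hsep w hbv]
        have h1 : ‖tent δ (p a) u • w a - tent δ (p b) v • w b‖ ≤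
            tent δ (p a) u * C + tent δ (p b) v * C := by
          calc ‖tent δ (p a) u • w a - tent δ (p b) v • w b‖
              ≤ ‖tent δ (p a) u • w a‖ + ‖tent δ (p b) v • w b‖ := norm_sub_le _ _
            _ ≤ tent δ (p a) u * C + tent δ (p b) v * C := by
                rw [norm_smul, norm_smul, Real.norm_eq_abs, abs_of_nonneg (tent_nonneg _ _ _),
                  Real.norm_eq_abs, abs_of_nonneg (tent_nonneg _ _ _)]
                exact add_le_add (mul_le_mul_of_nonneg_left (hC a) (tent_nonneg _ _ _))
                  (mul_le_mul_of_nonneg_left (hC b) (tent_nonneg _ _ _))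
        have h2 : tent δ (p a) u + tent δ (p b) v ≤ (2/δ) * dist u v := by
          have hta : tent δ (p a) u = 1 - (2/δ) * dist u (p a) := by
            rcases max_cases (0:ℝ) (1 - (2/δ) * dist u (p a)) with ⟨h, _⟩ | ⟨h, _⟩
            · exact absurd (h ▸ rfl : tent δ (p a) u = 0) hau
            · exact h
          have htb : tent δ (p b) v = 1 - (2/δ) * dist v (p b) := by
            rcases max_cases (0:ℝ) (1 - (2/δ) * dist v (p b)) with ⟨h, _⟩ | ⟨h, _⟩
            · exact absurd (h ▸ rfl : tent δ (p b) v = 0) hbv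
            · exact h
          have hd : δ ≤ dist u (p a) + dist u v + dist v (p b) := by
            have h3 := hsep a b hab
            have h4 : dist (p a) (p b) ≤ dist (p a) u + dist u v + dist v (p b) :=
              dist_triangle4 (p a) u v (p b)
            rw [dist_comm (p a) u] at h4
            linarith
          have hdd : (2/δ) * δ ≤ (2/δ) * (dist u (p a) + dist u v + dist v (p b)) :=
            mul_le_mul_of_nonneg_left hd (by positivity)
          rw [div_mul_cancel₀] at hdd
          · rw [hta, htb]; nlinarith [dist_nonneg (x := u) (y := v), div_pos (by norm_num : (0:ℝ) < 2) hδ]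
          · exact ne_of_gt hδ
        calc ‖tent δ (p a) u • w a - tent δ (p b) v • w b‖
            ≤ tent δ (p a) u * C + tent δ (p b) v * C := h1
          _ = (tent δ (p a) u + tent δ (p b) v) * C := by ring
          _ ≤ ((2/δ) * dist u v) * C := mul_le_mul_of_nonneg_right h2 hC0
          _ = (2/δ) * C * dist u v := by ring
    · push_neg at hv
      rw [tentSum_eq_single hδ hsep w hau, tentSum_eq_zero w hv, sub_zero, norm_smul]
      have h5 : ‖tent δ (p a) u‖ = |tent δ (p a) u - tent δ (p a) v| := by
        rw [hv a, sub_zero, Real.norm_eq_abs]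
      calc ‖tent δ (p a) u‖ * ‖w a‖ ≤ ((2/δ) * dist u v) * C := by
            apply mul_le_mul _ (hC a) (norm_nonneg _) (by positivity)
            rw [h5]; exact tent_dist_le hδ (p a) u v
        _ = (2/δ) * C * dist u v := by ring
  rcases Classical.em (∃ a, tent δ (p a) x ≠ 0) with hx | hx
  · exact key x y hx
  · rcases Classical.em (∃ b, tent δ (p b) y ≠ 0) with hy | hy
    · rw [norm_sub_rev, dist_comm]
      exact key y x hy
    · push_neg at hx hy
      rw [tentSum_eq_zero w hx, tentSum_eq_zero w hy, sub_zero, norm_zero]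
      positivity

end Tent

section Helpers

lemma one_le_abs_natCast_sub {a b : ℕ} (h : a ≠ b) : (1:ℝ) ≤ |(a:ℝ) - (b:ℝ)| := by
  rcases Nat.lt_or_ge a b with hlt | hge
  · have : (a:ℝ) + 1 ≤ b := by exact_mod_cast hlt
    rw [abs_sub_comm, abs_of_nonneg (by linarith)]; linarith
  · have hlt : b < a := lt_of_le_of_ne hge (fun hh => h hh.symm)
    have : (b:ℝ) + 1 ≤ a := by exact_mod_cast hlt
    rw [abs_of_nonneg (by linarith)]; linarith

lemma euclid_abs_apply_le_norm {m : ℕ} (x : EuclideanSpace ℝ (Fin m)) (i : Fin m) :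
    |x i| ≤ ‖x‖ := by
  rw [EuclideanSpace.norm_eq, show |x i| = Real.sqrt (‖x i‖^2) by
    rw [Real.norm_eq_abs, Real.sqrt_sq_eq_abs, abs_abs]]
  apply Real.sqrt_le_sqrt
  exact Finset.single_le_sum (f := fun j => ‖x j‖^2) (fun j _ => by positivity)
    (Finset.mem_univ i)

lemma euclid_abs_sub_apply_le_dist {m : ℕ} (x y : EuclideanSpace ℝ (Fin m)) (i : Fin m) :
    |x i - y i| ≤ dist x y := by
  rw [dist_eq_norm]
  simpa [PiLp.sub_apply] using euclid_abs_apply_le_norm (x - y) i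

/-- Zero out coordinate `0`. -/
noncomputable def maskRestL (m : ℕ) :
    EuclideanSpace ℝ (Fin (m+1)) →ₗ[ℝ] EuclideanSpace ℝ (Fin (m+1)) where
  toFun x := WithLp.toLp 2 (fun i => if i = 0 then 0 else x i)
  map_add' x y := by
    ext i; by_cases h : i = 0 <;> simp [h, PiLp.add_apply]
  map_smul' c x := by
    ext i; by_cases h : i = 0 <;> simp [h, PiLp.smul_apply]

/-- Zero out all coordinates except `0`. -/
noncomputable def maskHeadL (m : ℕ) :
    EuclideanSpace ℝ (Fin (m+1)) →ₗ[ℝ] EuclideanSpace ℝ (Fin (m+1)) where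
  toFun x := WithLp.toLp 2 (fun i => if i = 0 then x i else 0)
  map_add' x y := by
    ext i; by_cases h : i = 0 <;> simp [h, PiLp.add_apply]
  map_smul' c x := by
    ext i; by_cases h : i = 0 <;> simp [h, PiLp.smul_apply]

lemma maskRestL_apply {m : ℕ} (x : EuclideanSpace ℝ (Fin (m+1))) (i : Fin (m+1)) :
    maskRestL m x i = if i = 0 then 0 else x i := rfl

lemma maskHeadL_apply {m : ℕ} (x : EuclideanSpace ℝ (Fin (m+1))) (i : Fin (m+1)) :
    maskHeadL m x i = if i = 0 then x i else 0 := rfl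

lemma norm_maskRestL_le {m : ℕ} (x : EuclideanSpace ℝ (Fin (m+1))) :
    ‖maskRestL m x‖ ≤ ‖x‖ := by
  rw [EuclideanSpace.norm_eq, EuclideanSpace.norm_eq]
  apply Real.sqrt_le_sqrt
  apply Finset.sum_le_sum
  intro i _
  rw [maskRestL_apply]
  by_cases h : i = 0 <;> simp [h] <;> positivity

lemma norm_maskHeadL_le {m : ℕ} (x : EuclideanSpace ℝ (Fin (m+1))) :
    ‖maskHeadL m x‖ ≤ ‖x‖ := by
  rw [EuclideanSpace.norm_eq, EuclideanSpace.norm_eq]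
  apply Real.sqrt_le_sqrt
  apply Finset.sum_le_sum
  intro i _
  rw [maskHeadL_apply]
  by_cases h : i = 0 <;> simp [h] <;> positivity

lemma lipschitzWith_single_comp {A : Type*} [PseudoMetricSpace A] {m : ℕ} {K : ℝ≥0}
    {f : A → ℝ} (hf : LipschitzWith K f) (i : Fin m) :
    LipschitzWith K (fun x => (EuclideanSpace.single i (f x) : EuclideanSpace ℝ (Fin m))) := by
  apply LipschitzWith.of_dist_le_mul
  intro x y
  rw [EuclideanSpace.dist_single_same]
  exact hf.dist_le_mul x y

lemma shear_spec {E : Type*} [NormedAddCommGroup E] [NormedSpace ℝ E]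
    (P : E →ₗ[ℝ] E) (hP : ∀ z, ‖P z‖ ≤ ‖z‖) (φ : E → E) {K : ℝ≥0}
    (hφ : LipschitzWith K φ) (hker : ∀ u, P (φ u) = 0) :
    ∃ S Sinv : E → E, (∀ x, S x = x + φ (P x)) ∧
      Function.LeftInverse Sinv S ∧ Function.RightInverse Sinv S ∧
      LipschitzWith (1 + K) S ∧ LipschitzWith (1 + K) Sinv := by
  have hPlip : LipschitzWith 1 (fun x => P x) := by
    apply LipschitzWith.of_dist_le_mul
    intro x y
    rw [dist_eq_norm, dist_eq_norm, ← map_sub]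
    simpa using hP (x - y)
  refine ⟨fun x => x + φ (P x), fun x => x - φ (P x), fun x => rfl, ?_, ?_, ?_, ?_⟩
  · intro x
    show (x + φ (P x)) - φ (P (x + φ (P x))) = x
    rw [map_add, hker, add_zero]
    abel
  · intro x
    show (x - φ (P x)) + φ (P (x - φ (P x))) = x
    rw [map_sub, hker, sub_zero]
    abel
  · have := LipschitzWith.id.add (hφ.comp hPlip)
    simpa [mul_one] using this
  · have := LipschitzWith.id.sub (hφ.comp hPlip)
    simpa [mul_one] using this

lemma digit_inj {K a b s r : ℕ} (hs : s < K) (hr : r < K) (h : a*K + s = b*K + r) :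
    a = b ∧ s = r := by
  rcases Nat.lt_trichotomy a b with hlt | heq | hgt
  · have h2 : a*K + K ≤ b*K := by
      have := Nat.mul_le_mul_right K (Nat.succ_le_of_lt hlt)
      rwa [Nat.succ_mul] at this
    omega
  · refine ⟨heq, ?_⟩; subst heq; omega
  · have h2 : b*K + K ≤ a*K := by
      have := Nat.mul_le_mul_right K (Nat.succ_le_of_lt hgt)
      rwa [Nat.succ_mul] at this
    omega

end Helpers

set_option maxHeartbeats 1600000 in
/-- Theorem 2.8 of the paper (main interpolation theorem): given data `{(x^α, y^α)}` on the
uniform grid of `[0,1]^d` and any `ε > 0`, there is a bijection `G` of `ℝ^d` with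
`‖G(x^α) − y^α‖ < ε` for every `α`, such that `G` and `G^{−1}` are Lipschitz with constant
at most `(n/(n−1))(1 + 6Nc)(1 + 2Nε)(1 + 6Nε^{−1}c)`, where `N = n^d` and
`c = max_α ‖y^α − x^α‖ + 1/n`. -/
theorem inn_interpolation (d n : ℕ) (hd : 2 ≤ d) (hn : 2 ≤ n) (N : ℕ) (hN : N = n ^ d)
    (y : (Fin d → Fin n) → EuclideanSpace ℝ (Fin d))
    (c : ℝ) (hc : c = (⨆ α : Fin d → Fin n, ‖y α - gridPoint d n α‖) + 1 / (n : ℝ))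
    (ε : ℝ) (hε : 0 < ε) :
    ∃ G Ginv : EuclideanSpace ℝ (Fin d) → EuclideanSpace ℝ (Fin d),
      Function.LeftInverse Ginv G ∧ Function.RightInverse Ginv G ∧
      (∀ α : Fin d → Fin n, ‖G (gridPoint d n α) - y α‖ < ε) ∧
      LipschitzWith (Real.toNNReal (((n : ℝ) / ((n : ℝ) - 1)) * (1 + 6 * (N : ℝ) * c) *
        (1 + 2 * (N : ℝ) * ε) * (1 + 6 * (N : ℝ) * ε⁻¹ * c))) G ∧
      LipschitzWith (Real.toNNReal (((n : ℝ) / ((n : ℝ) - 1)) * (1 + 6 * (N : ℝ) * c) *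
        (1 + 2 * (N : ℝ) * ε) * (1 + 6 * (N : ℝ) * ε⁻¹ * c))) Ginv := by
  obtain ⟨d₂, rfl⟩ : ∃ k, d = k + 2 := ⟨d - 2, by omega⟩
  haveI : NeZero n := ⟨by omega⟩
  -- basic positivity facts
  have hn0 : (0:ℝ) < n := by positivity
  have hnR : (2:ℝ) ≤ n := by exact_mod_cast hn
  have hNpos : 0 < N := by rw [hN]; positivity
  have hN0 : (0:ℝ) < N := by exact_mod_cast hNpos
  have hNR : (N:ℝ) = (n:ℝ)^(d₂+2) := by rw [hN]; push_cast; ring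
  have hnN : n ≤ N := by
    rw [hN]; calc n = n^1 := (pow_one n).symm
    _ ≤ n^(d₂+2) := Nat.pow_le_pow_right (by omega) (by omega)
  have hnNR : (n:ℝ) ≤ N := by exact_mod_cast hnN
  -- the maximal displacement M
  set M := ⨆ α : Fin (d₂+2) → Fin n, ‖y α - gridPoint (d₂+2) n α‖ with hM
  have hMb : ∀ α, ‖y α - gridPoint (d₂+2) n α‖ ≤ M := by
    intro α
    rw [hM]
    exact le_ciSup (f := fun α => ‖y α - gridPoint (d₂+2) n α‖)
      (Set.Finite.bddAbove (Set.finite_range _)) α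
  have hM0 : 0 ≤ M := le_trans (norm_nonneg _) (hMb (Classical.arbitrary _))
  have hc' : c = M + 1/n := hc
  have hc0 : 0 ≤ c := by rw [hc']; positivity
  -- the distinguished second coordinate
  set i1 : Fin (d₂+2) := Fin.succ 0 with hi1
  have hi1ne : i1 ≠ 0 := Fin.succ_ne_zero 0
  -- the rank of α in the order sorted by `y α i1`
  set e := (Fintype.equivFin (Fin (d₂+2) → Fin n)).symm with he
  set F : Fin (Fintype.card (Fin (d₂+2) → Fin n)) → ℝ := fun j => y (e j) i1 with hF
  set σ := Tuple.sort F with hσ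
  set rank : (Fin (d₂+2) → Fin n) → ℕ := fun α => ((σ.symm (e.symm α)) : ℕ) with hrank
  have hcard : Fintype.card (Fin (d₂+2) → Fin n) = N := by
    rw [Fintype.card_fun, Fintype.card_fin, Fintype.card_fin, hN]
  have hrank_lt : ∀ α, rank α < N := by
    intro α
    have h := (σ.symm (e.symm α)).isLt
    exact lt_of_lt_of_eq h hcard
  have hrank_inj : ∀ α β, rank α = rank β → α = β := by
    intro α β h
    have h1 : σ.symm (e.symm α) = σ.symm (e.symm β) := Fin.val_injective h
    exact e.symm.injective (σ.symm.injective h1)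
  have hsorted : ∀ α β, rank α ≤ rank β → y α i1 ≤ y β i1 := by
    intro α β h
    have h2 : σ.symm (e.symm α) ≤ σ.symm (e.symm β) := h
    have h3 : F (σ (σ.symm (e.symm α))) ≤ F (σ (σ.symm (e.symm β))) := Tuple.monotone_sort F h2
    rw [Equiv.apply_symm_apply, Equiv.apply_symm_apply] at h3
    simpa [hF, Equiv.apply_symm_apply] using h3
  -- the perturbation scale δ and perturbed second coordinates v
  set δ : ℝ := ε / (3*N) with hδ
  have hδ0 : 0 < δ := by positivity
  have hNδ : (N:ℝ) * δ = ε/3 := by rw [hδ]; field_simp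
  set v : (Fin (d₂+2) → Fin n) → ℝ := fun α => y α i1 + (rank α : ℝ) * δ with hv
  have hv_key : ∀ α β, rank α < rank β → δ ≤ v β - v α := by
    intro α β h
    have h1 : y α i1 ≤ y β i1 := hsorted α β h.le
    have h2 : (rank α : ℝ) + 1 ≤ rank β := by exact_mod_cast h
    simp only [hv]
    nlinarith
  have hv_gap : ∀ α β, α ≠ β → δ ≤ |v α - v β| := by
    intro α β hne
    rcases Nat.lt_or_ge (rank α) (rank β) with h | h
    · calc δ ≤ v β - v α := hv_key _ _ h
        _ ≤ |v α - v β| := by rw [abs_sub_comm]; exact le_abs_self _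
    · have hlt : rank β < rank α :=
        lt_of_le_of_ne h (fun hh => hne (hrank_inj _ _ hh.symm))
      exact (hv_key β α hlt).trans (le_abs_self _)
  have hv_close : ∀ α, |v α - y α i1| < ε := by
    intro α
    have h1 : v α - y α i1 = (rank α : ℝ) * δ := by simp [hv]
    rw [h1, abs_of_nonneg (by positivity)]
    have h2 : (rank α : ℝ) ≤ N := by exact_mod_cast (hrank_lt α).le
    nlinarith
  -- encoding of the d-1 trailing digits
  set sN : (Fin (d₂+2) → Fin n) → ℕ :=
    fun α => ((finFunctionFinEquiv (fun j : Fin (d₂+1) => α j.succ)) : ℕ) with hsN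
  have hs_lt : ∀ α, sN α < n^(d₂+1) := fun α => Fin.isLt _
  have hs_inj : ∀ α β, α 0 = β 0 → sN α = sN β → α = β := by
    intro α β h0 hs
    have h1 : (fun j : Fin (d₂+1) => α j.succ) = (fun j => β j.succ) :=
      finFunctionFinEquiv.injective (Fin.val_injective hs)
    funext i
    refine Fin.cases h0 (fun j => ?_) i
    exact congrFun h1 j
  have hsN_le : ∀ (a : ℕ), a < n^(d₂+1) → (a:ℝ)/N ≤ 1/n := by
    intro a ha
    rw [div_le_div_iff₀ hN0 hn0, one_mul]
    have h1 : a * n ≤ n^(d₂+1) * n := Nat.mul_le_mul_right n ha.le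
    have h2 : n^(d₂+1) * n = N := by rw [hN]; ring
    calc (a:ℝ) * n ≤ (n:ℝ)^(d₂+1) * n := by exact_mod_cast h1
      _ = N := by exact_mod_cast h2
  -- separated first coordinates
  set t : (Fin (d₂+2) → Fin n) → ℝ := fun α => ((α 0 : ℕ) : ℝ)/n + (sN α : ℝ)/N with ht
  have ht_eq : ∀ α, t α = (((α 0 : ℕ) * n^(d₂+1) + sN α : ℕ) : ℝ)/N := by
    intro α
    have hN' : (N:ℝ) ≠ 0 := ne_of_gt hN0
    have hn' : (n:ℝ) ≠ 0 := ne_of_gt hn0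
    simp only [ht]
    push_cast
    rw [hNR, pow_succ]
    field_simp
  have ht_gap : ∀ α β, α ≠ β → 1/(N:ℝ) ≤ |t α - t β| := by
    intro α β hne
    have hab : ((α 0 : ℕ) * n^(d₂+1) + sN α) ≠ ((β 0 : ℕ) * n^(d₂+1) + sN β) := by
      intro h
      obtain ⟨h0, hs⟩ := digit_inj (hs_lt α) (hs_lt β) h
      exact hne (hs_inj α β (Fin.val_injective h0) hs)
    have h1 : (1:ℝ) ≤ |(((α 0 : ℕ) * n^(d₂+1) + sN α : ℕ):ℝ) -
        (((β 0 : ℕ) * n^(d₂+1) + sN β : ℕ):ℝ)| := one_le_abs_natCast_sub hab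
    have h2 : t α - t β = ((((α 0 : ℕ) * n^(d₂+1) + sN α : ℕ):ℝ) -
        (((β 0 : ℕ) * n^(d₂+1) + sN β : ℕ):ℝ))/N := by
      rw [ht_eq α, ht_eq β]; ring
    rw [h2, abs_div, abs_of_pos hN0]
    gcongr
  -- ============ shear A ============
  set qA : (Fin (d₂+1) → Fin n) → EuclideanSpace ℝ (Fin (d₂+2)) :=
    fun ρ => WithLp.toLp 2 (fun i => Fin.cases (motive := fun _ => ℝ) 0 (fun j => ((ρ j : ℕ):ℝ)/n) i) with hqA
  have hqA_sep : ∀ ρ ρ', ρ ≠ ρ' → (1:ℝ)/n ≤ dist (qA ρ) (qA ρ') := by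
    intro ρ ρ' hne
    obtain ⟨j, hj⟩ := Function.ne_iff.mp hne
    have h1 : |qA ρ j.succ - qA ρ' j.succ| ≤ dist (qA ρ) (qA ρ') :=
      euclid_abs_sub_apply_le_dist _ _ _
    have h2 : qA ρ j.succ = ((ρ j : ℕ):ℝ)/n := by simp [hqA]
    have h3 : qA ρ' j.succ = ((ρ' j : ℕ):ℝ)/n := by simp [hqA]
    have h4 : (1:ℝ) ≤ |((ρ j : ℕ):ℝ) - ((ρ' j : ℕ):ℝ)| :=
      one_le_abs_natCast_sub (fun h => hj (Fin.val_injective h))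
    rw [h2, h3, div_sub_div_same, abs_div, abs_of_pos hn0] at h1
    refine le_trans ?_ h1
    gcongr
  set wA : (Fin (d₂+1) → Fin n) → ℝ := fun ρ => ((finFunctionFinEquiv ρ : ℕ):ℝ)/N with hwA
  have hwA_bound : ∀ ρ, ‖wA ρ‖ ≤ 1/n := by
    intro ρ
    rw [Real.norm_eq_abs, abs_of_nonneg (by positivity)]
    exact hsN_le _ (Fin.isLt _)
  set gA := tentSum ((1:ℝ)/n) qA wA with hgA
  have hgA_lip : LipschitzWith (Real.toNNReal (2/((1:ℝ)/n) * (1/n))) gA :=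
    tentSum_lipschitz (by positivity) hqA_sep (by positivity) hwA_bound
  have hmg : ∀ α, maskRestL (d₂+1) (gridPoint (d₂+2) n α) = qA (fun j => α j.succ) := by
    intro α
    ext i
    refine Fin.cases ?_ (fun j => ?_) i
    · simp [maskRestL_apply, hqA]
    · simp [maskRestL_apply, hqA, Fin.succ_ne_zero, gridPoint]
  have hgA_grid : ∀ α, gA (maskRestL (d₂+1) (gridPoint (d₂+2) n α)) = (sN α : ℝ)/N := by
    intro α
    rw [hmg, hgA, tentSum_center (by positivity) hqA_sep]
  -- ============ the point after shear A ============
  set P1 : (Fin (d₂+2) → Fin n) → EuclideanSpace ℝ (Fin (d₂+2)) :=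
    fun α => gridPoint (d₂+2) n α + EuclideanSpace.single 0 ((sN α:ℝ)/N) with hP1
  have hP1_0 : ∀ α, P1 α 0 = t α := by
    intro α
    simp [hP1, PiLp.add_apply, EuclideanSpace.single_apply, gridPoint, ht]
  have hP1_succ : ∀ α (j : Fin (d₂+1)), P1 α j.succ = ((α j.succ : ℕ):ℝ)/n := by
    intro α j
    simp [hP1, PiLp.add_apply, EuclideanSpace.single_apply, Fin.succ_ne_zero, gridPoint]
  -- ============ shear B ============
  set pB : (Fin (d₂+2) → Fin n) → EuclideanSpace ℝ (Fin (d₂+2)) :=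
    fun α => EuclideanSpace.single 0 (t α) with hpB
  have hpB_sep : ∀ α β, α ≠ β → (1:ℝ)/N ≤ dist (pB α) (pB β) := by
    intro α β hne
    rw [hpB]
    simp only [EuclideanSpace.dist_single_same, Real.dist_eq]
    exact ht_gap α β hne
  have hmh : ∀ α, maskHeadL (d₂+1) (P1 α) = pB α := by
    intro α
    ext i
    refine Fin.cases ?_ (fun j => ?_) i
    · rw [maskHeadL_apply]
      simp [hP1_0 α, hpB, EuclideanSpace.single_apply]
    · rw [maskHeadL_apply]
      simp [Fin.succ_ne_zero, hpB, EuclideanSpace.single_apply,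
        (Fin.succ_ne_zero j : j.succ ≠ 0)]
  set wB : (Fin (d₂+2) → Fin n) → EuclideanSpace ℝ (Fin (d₂+2)) :=
    fun α => maskRestL (d₂+1) (y α - gridPoint (d₂+2) n α) +
      EuclideanSpace.single i1 ((rank α:ℝ) * δ) with hwB
  have hwB_bound : ∀ α, ‖wB α‖ ≤ M + ε/3 := by
    intro α
    rw [hwB]
    refine le_trans (norm_add_le _ _) ?_
    have h1 : ‖maskRestL (d₂+1) (y α - gridPoint (d₂+2) n α)‖ ≤ M :=
      le_trans (norm_maskRestL_le _) (hMb α)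
    have h2 : ‖(EuclideanSpace.single i1 ((rank α:ℝ) * δ) :
        EuclideanSpace ℝ (Fin (d₂+2)))‖ ≤ ε/3 := by
      rw [EuclideanSpace.norm_single, Real.norm_eq_abs, abs_of_nonneg (by positivity)]
      have h2' : (rank α : ℝ) ≤ N := by exact_mod_cast (hrank_lt α).le
      nlinarith
    linarith
  set fB := tentSum ((1:ℝ)/N) pB wB with hfB
  have hfB_lip : LipschitzWith (Real.toNNReal (2/((1:ℝ)/N) * (M + ε/3))) fB :=
    tentSum_lipschitz (by positivity) hpB_sep (by positivity) hwB_bound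
  have hfB_center : ∀ α, fB (pB α) = wB α :=
    fun α => tentSum_center (by positivity) hpB_sep wB α
  have hwB_0 : ∀ α, wB α 0 = 0 := by
    intro α
    have e1 : (maskRestL (d₂+1) (y α - gridPoint (d₂+2) n α)) 0 = 0 := by
      rw [maskRestL_apply, if_pos rfl]
    have e2 : (EuclideanSpace.single i1 ((rank α:ℝ)*δ) : EuclideanSpace ℝ (Fin (d₂+2))) 0
        = 0 := by
      rw [EuclideanSpace.single_apply, if_neg (Ne.symm hi1ne)]
    simp only [hwB]
    rw [PiLp.add_apply, e1, e2, add_zero]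
  have hkerB : ∀ u, maskHeadL (d₂+1) (fB u) = 0 := by
    intro u
    rw [hfB, tentSum, map_sum]
    apply Finset.sum_eq_zero
    intro a _
    rw [map_smul]
    convert smul_zero _
    ext i
    rw [maskHeadL_apply]
    refine Fin.cases ?_ (fun j => ?_) i
    · simp [hwB_0 a]
    · simp [Fin.succ_ne_zero]
  -- ============ the point after shear B ============
  set P2 : (Fin (d₂+2) → Fin n) → EuclideanSpace ℝ (Fin (d₂+2)) :=
    fun α => P1 α + wB α with hP2
  have hP2_0 : ∀ α, P2 α 0 = t α := by
    intro α
    rw [hP2]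
    simp only [PiLp.add_apply]
    rw [hP1_0 α, hwB_0 α, add_zero]
  have hP2_succ : ∀ α (j : Fin (d₂+1)), P2 α j.succ = if j = 0 then v α else y α j.succ := by
    intro α j
    rw [hP2]
    simp only [PiLp.add_apply]
    rw [hP1_succ α j, hwB]
    simp only [PiLp.add_apply, maskRestL_apply, PiLp.sub_apply,
      EuclideanSpace.single_apply, if_neg (Fin.succ_ne_zero j : j.succ ≠ 0)]
    by_cases hj : j = 0
    · subst hj
      rw [if_pos rfl, if_pos rfl]
      simp only [hv, hi1, gridPoint]
      ring
    · have : j.succ ≠ i1 := by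
        rw [hi1]
        exact fun h => hj (Fin.succ_injective _ h)
      rw [if_neg this, if_neg hj]
      simp [gridPoint]
  -- ============ shear C ============
  set qC : (Fin (d₂+2) → Fin n) → EuclideanSpace ℝ (Fin (d₂+2)) :=
    fun α => maskRestL (d₂+1) (P2 α) with hqC
  have hqC_i1 : ∀ α, qC α i1 = v α := by
    intro α
    simp only [hqC]
    rw [maskRestL_apply, if_neg hi1ne, hi1, hP2_succ α 0, if_pos rfl]
  have hqC_sep : ∀ α β, α ≠ β → δ ≤ dist (qC α) (qC β) := by
    intro α β hne
    have h1 : |qC α i1 - qC β i1| ≤ dist (qC α) (qC β) :=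
      euclid_abs_sub_apply_le_dist _ _ _
    rw [hqC_i1 α, hqC_i1 β] at h1
    exact le_trans (hv_gap α β hne) h1
  have hmq : ∀ α, maskRestL (d₂+1) (P2 α) = qC α := by
    intro α
    rw [hqC]
  set wC : (Fin (d₂+2) → Fin n) → ℝ := fun α => y α 0 - t α with hwC
  have hwC_bound : ∀ α, ‖wC α‖ ≤ c := by
    intro α
    simp only [hwC, Real.norm_eq_abs]
    have h1 : y α 0 - t α = (y α 0 - gridPoint (d₂+2) n α 0) - (sN α : ℝ)/N := by
      rw [ht]
      simp only [gridPoint]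
      ring
    rw [h1]
    have h2 : |y α 0 - gridPoint (d₂+2) n α 0| ≤ M := by
      have := euclid_abs_apply_le_norm (y α - gridPoint (d₂+2) n α) 0
      rw [PiLp.sub_apply] at this
      exact le_trans this (hMb α)
    have h3 : |(sN α : ℝ)/N| ≤ 1/n := by
      rw [abs_of_nonneg (by positivity)]
      exact hsN_le _ (hs_lt α)
    calc |(y α 0 - gridPoint (d₂+2) n α 0) - (sN α : ℝ)/N|
        ≤ |y α 0 - gridPoint (d₂+2) n α 0| + |(sN α : ℝ)/N| := abs_sub _ _
      _ ≤ M + 1/n := add_le_add h2 h3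
      _ = c := hc'.symm
  set hC := tentSum δ qC wC with hhC
  have hhC_lip : LipschitzWith (Real.toNNReal (2/δ * c)) hC :=
    tentSum_lipschitz hδ0 hqC_sep hc0 hwC_bound
  have hhC_center : ∀ α, hC (qC α) = wC α :=
    fun α => tentSum_center hδ0 hqC_sep wC α
  -- ============ assemble the shears ============
  obtain ⟨SA, SAinv, hSA_eval, hAl, hAr, hAlip, hAlip'⟩ :=
    shear_spec (maskRestL (d₂+1)) norm_maskRestL_le
      (fun z => (EuclideanSpace.single 0 (gA z) : EuclideanSpace ℝ (Fin (d₂+2))))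
      (lipschitzWith_single_comp hgA_lip 0)
      (by
        intro u
        ext i
        rw [maskRestL_apply]
        by_cases h : i = 0
        · simp [h]
        · simp [h, EuclideanSpace.single_apply])
  obtain ⟨SB, SBinv, hSB_eval, hBl, hBr, hBlip, hBlip'⟩ :=
    shear_spec (maskHeadL (d₂+1)) norm_maskHeadL_le fB hfB_lip hkerB
  obtain ⟨SC, SCinv, hSC_eval, hCl, hCr, hClip, hClip'⟩ :=
    shear_spec (maskRestL (d₂+1)) norm_maskRestL_le
      (fun z => (EuclideanSpace.single 0 (hC z) : EuclideanSpace ℝ (Fin (d₂+2))))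
      (lipschitzWith_single_comp hhC_lip 0)
      (by
        intro u
        ext i
        rw [maskRestL_apply]
        by_cases h : i = 0
        · simp [h]
        · simp [h, EuclideanSpace.single_apply])
  -- evaluations along the grid
  have hSA_grid : ∀ α, SA (gridPoint (d₂+2) n α) = P1 α := by
    intro α
    rw [hSA_eval, hgA_grid α, hP1]
  have hSB_P1 : ∀ α, SB (P1 α) = P2 α := by
    intro α
    rw [hSB_eval, hmh α, hfB_center α, hP2]
  have hSC_P2 : ∀ α, SC (P2 α) = P2 α + EuclideanSpace.single 0 (wC α) := by
    intro α
    rw [hSC_eval, hmq α, hhC_center α]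
  -- the interpolation error
  have herr : ∀ α, ‖SC (SB (SA (gridPoint (d₂+2) n α))) - y α‖ < ε := by
    intro α
    rw [hSA_grid α, hSB_P1 α, hSC_P2 α]
    have hdiff : P2 α + EuclideanSpace.single 0 (wC α) - y α =
        EuclideanSpace.single i1 (v α - y α i1) := by
      ext i
      refine Fin.cases ?_ (fun j => ?_) i
      · rw [PiLp.sub_apply, PiLp.add_apply, hP2_0 α]
        rw [show (EuclideanSpace.single 0 (wC α) : EuclideanSpace ℝ (Fin (d₂+2))) 0 = wC α
          from by rw [EuclideanSpace.single_apply, if_pos rfl]]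
        rw [show (EuclideanSpace.single i1 (v α - y α i1) :
            EuclideanSpace ℝ (Fin (d₂+2))) 0 = 0
          from by rw [EuclideanSpace.single_apply, if_neg (Ne.symm hi1ne)]]
        simp only [hwC]
        ring
      · rw [PiLp.sub_apply, PiLp.add_apply, hP2_succ α j]
        rw [show (EuclideanSpace.single 0 (wC α) : EuclideanSpace ℝ (Fin (d₂+2))) j.succ = 0
          from by rw [EuclideanSpace.single_apply, if_neg (Fin.succ_ne_zero j)]]
        by_cases hj : j = 0
        · subst hj
          rw [if_pos rfl]
          rw [show (EuclideanSpace.single i1 (v α - y α i1) :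
              EuclideanSpace ℝ (Fin (d₂+2))) (Fin.succ 0) = v α - y α i1
            from by rw [EuclideanSpace.single_apply, if_pos hi1.symm]]
          rw [← hi1]
          ring
        · rw [if_neg hj]
          rw [show (EuclideanSpace.single i1 (v α - y α i1) :
              EuclideanSpace ℝ (Fin (d₂+2))) j.succ = 0
            from by
              rw [EuclideanSpace.single_apply, if_neg (by
                rw [hi1]; exact fun h => hj (Fin.succ_injective _ h))]]
          ring
    rw [hdiff, EuclideanSpace.norm_single, Real.norm_eq_abs]
    exact hv_close α
  -- the final Lipschitz bound
  set Kfull : ℝ := ((n : ℝ) / ((n : ℝ) - 1)) * (1 + 6 * (N : ℝ) * c) *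
      (1 + 2 * (N : ℝ) * ε) * (1 + 6 * (N : ℝ) * ε⁻¹ * c) with hKfull
  have hKA : 2/((1:ℝ)/n) * (1/n) = 2 := by field_simp
  have hKB : 2/((1:ℝ)/N) * (M + ε/3) = 2*N*(M + ε/3) := by field_simp
  have hKC : 2/δ * c = 6*N*ε⁻¹*c := by
    rw [hδ, div_div_eq_mul_div, div_eq_mul_inv]
    ring
  have hineq : (1 + Real.toNNReal (2/δ * c)) *
      ((1 + Real.toNNReal (2/((1:ℝ)/N) * (M + ε/3))) *
       (1 + Real.toNNReal (2/((1:ℝ)/n) * (1/n)))) ≤ Real.toNNReal Kfull := by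
    have hKA0 : (0:ℝ) ≤ 2/((1:ℝ)/n) * (1/n) := by positivity
    have hKB0 : (0:ℝ) ≤ 2/((1:ℝ)/N) * (M + ε/3) := by positivity
    have hKC0 : (0:ℝ) ≤ 2/δ * c := by positivity
    have hcoe : (((1 + Real.toNNReal (2/δ * c)) *
        ((1 + Real.toNNReal (2/((1:ℝ)/N) * (M + ε/3))) *
         (1 + Real.toNNReal (2/((1:ℝ)/n) * (1/n)))) : ℝ≥0) : ℝ) =
        (1 + 2/δ * c) * ((1 + 2/((1:ℝ)/N) * (M + ε/3)) * (1 + 2/((1:ℝ)/n) * (1/n))) := by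
      push_cast [Real.coe_toNNReal _ hKA0, Real.coe_toNNReal _ hKB0,
        Real.coe_toNNReal _ hKC0]
      ring
    have hreal : (1 + 2/δ * c) * ((1 + 2/((1:ℝ)/N) * (M + ε/3)) *
        (1 + 2/((1:ℝ)/n) * (1/n))) ≤ Kfull := by
      rw [hKA, hKB, hKC, hKfull]
      rw [show (1:ℝ) + 2 = 3 from by norm_num]
      have h1 : (1:ℝ) ≤ (n:ℝ)/((n:ℝ)-1) := by
        rw [le_div_iff₀ (by linarith)]
        linarith
      have h2 : 3*(1 + 2*(N:ℝ)*(M + ε/3)) ≤ (1 + 6*(N:ℝ)*c)*(1 + 2*(N:ℝ)*ε) := by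
        have h3 : (1:ℝ) ≤ (N:ℝ)*(1/n) := by
          rw [mul_one_div, le_div_iff₀ hn0, one_mul]
          exact hnNR
        have h4 : 6*(N:ℝ)*c = 6*N*M + 6*(N*(1/n)) := by rw [hc']; ring
        nlinarith [mul_nonneg (mul_nonneg (by norm_num : (0:ℝ) ≤ 12) (mul_pos hN0 hN0).le)
          (mul_nonneg hc0 hε.le), hε.le, hN0.le, hM0]
      have h5 : (0:ℝ) < 1 + 6*(N:ℝ)*ε⁻¹*c := by positivity
      have h6 : (0:ℝ) ≤ (1 + 6*(N:ℝ)*c)*(1 + 2*(N:ℝ)*ε) := by positivity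
      calc (1 + 6*(N:ℝ)*ε⁻¹*c) * ((1 + 2*(N:ℝ)*(M + ε/3)) * 3)
          ≤ (1 + 6*(N:ℝ)*ε⁻¹*c) * ((1 + 6*(N:ℝ)*c)*(1 + 2*(N:ℝ)*ε)) := by
            apply mul_le_mul_of_nonneg_left _ h5.le
            calc (1 + 2*(N:ℝ)*(M + ε/3)) * 3 = 3*(1 + 2*(N:ℝ)*(M + ε/3)) := by ring
              _ ≤ (1 + 6*(N:ℝ)*c)*(1 + 2*(N:ℝ)*ε) := h2
        _ ≤ ((n:ℝ)/((n:ℝ)-1)) * (1 + 6*(N:ℝ)*c) * (1 + 2*(N:ℝ)*ε) *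
            (1 + 6*(N:ℝ)*ε⁻¹*c) := by
            rw [show ((n:ℝ)/((n:ℝ)-1)) * (1 + 6*(N:ℝ)*c) * (1 + 2*(N:ℝ)*ε) *
                (1 + 6*(N:ℝ)*ε⁻¹*c) = (1 + 6*(N:ℝ)*ε⁻¹*c) *
                (((n:ℝ)/((n:ℝ)-1)) * ((1 + 6*(N:ℝ)*c) * (1 + 2*(N:ℝ)*ε))) from by ring]
            apply mul_le_mul_of_nonneg_left _ h5.le
            calc (1 + 6*(N:ℝ)*c)*(1 + 2*(N:ℝ)*ε)
                = 1 * ((1 + 6*(N:ℝ)*c)*(1 + 2*(N:ℝ)*ε)) := by ring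
              _ ≤ ((n:ℝ)/((n:ℝ)-1)) * ((1 + 6*(N:ℝ)*c)*(1 + 2*(N:ℝ)*ε)) := by
                  apply mul_le_mul_of_nonneg_right h1 h6
    conv_lhs => rw [← Real.toNNReal_coe (r := (1 + Real.toNNReal (2/δ * c)) *
        ((1 + Real.toNNReal (2/((1:ℝ)/N) * (M + ε/3))) *
         (1 + Real.toNNReal (2/((1:ℝ)/n) * (1/n)))))]
    exact Real.toNNReal_mono (by rw [hcoe]; exact hreal)
  -- conclude
  refine ⟨fun x => SC (SB (SA x)), fun x => SAinv (SBinv (SCinv x)), ?_, ?_, ?_, ?_, ?_⟩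
  · intro x
    simp only []
    rw [hCl (SB (SA x)), hBl (SA x), hAl x]
  · intro x
    simp only []
    rw [hAr (SBinv (SCinv x)), hBr (SCinv x), hCr x]
  · intro α
    exact herr α
  · exact ((hClip.comp (hBlip.comp hAlip))).weaken (by
      calc (1 + Real.toNNReal (2/δ * c)) * ((1 + Real.toNNReal (2/((1:ℝ)/N) * (M + ε/3))) *
          (1 + Real.toNNReal (2/((1:ℝ)/n) * (1/n)))) ≤ Real.toNNReal Kfull := hineq
      )
  · exact ((hAlip'.comp (hBlip'.comp hClip'))).weaken (by
      calc (1 + Real.toNNReal (2/((1:ℝ)/n) * (1/n))) *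
          ((1 + Real.toNNReal (2/((1:ℝ)/N) * (M + ε/3))) * (1 + Real.toNNReal (2/δ * c)))
          = (1 + Real.toNNReal (2/δ * c)) * ((1 + Real.toNNReal (2/((1:ℝ)/N) * (M + ε/3))) *
          (1 + Real.toNNReal (2/((1:ℝ)/n) * (1/n)))) := by ring
        _ ≤ Real.toNNReal Kfull := hineq)
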